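/- Let a > 0, λ > a²/(2(a+1)), and x ≥ 0. The function f'(y) = y − x + λa(a+1)/(a+y)² on [0,∞) attains its minimum at ȳ = (2λa(a+1))^{1/3} − a > 0, and f'(ȳ) = (3/2^{2/3})(λa(a+1))^{1/3} − a − x = t₁* − x. Hence if 0 ≤ x ≤ t₁* then f(y) = (1/2)(y−x)² + λ(a+1)y/(a+y) is nondecreasing on [0,∞) and minimized at y = 0. -/

import Mathlib

/-- For `a > 0`, `λ > a²/(2(a+1))`, `x ≥ 0`: the function
`f'(y) = y − x + λa(a+1)/(a+y)²` on `[0,∞)` attains its minimum at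
`ȳ = (2λa(a+1))^{1/3} − a > 0`, with `f'(ȳ) = t₁* − x`; hence if
`0 ≤ x ≤ t₁*` then `f(y) = (1/2)(y−x)² + λ(a+1)y/(a+y)` is nondecreasing on
`[0,∞)` and minimized at `y = 0`. -/
theorem tl1_supercritical_small_x (a lam x : ℝ) (ha : 0 < a)
    (hlam : a ^ 2 / (2 * (a + 1)) < lam) (hx : 0 ≤ x) :
    let ybar := (2 * lam * a * (a + 1)) ^ ((1 : ℝ) / 3) - a
    let t₁ := (3 / (2 : ℝ) ^ ((2 : ℝ) / 3)) * (lam * a * (a + 1)) ^ ((1 : ℝ) / 3) - a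
    let f' : ℝ → ℝ := fun y => y - x + lam * a * (a + 1) / (a + y) ^ 2
    let f : ℝ → ℝ := fun y => (1 / 2) * (y - x) ^ 2 + lam * ((a + 1) * y / (a + y))
    0 < ybar ∧ (∀ y : ℝ, 0 ≤ y → f' ybar ≤ f' y) ∧ f' ybar = t₁ - x ∧
      (x ≤ t₁ → MonotoneOn f (Set.Ici 0) ∧ ∀ y : ℝ, 0 ≤ y → f 0 ≤ f y) := by
  intro ybar t₁ f' f
  have ha1 : 0 < a + 1 := by linarith
  have hlam0 : 0 < lam := lt_trans (by positivity) hlam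
  have hc : 0 < lam * a * (a + 1) := by positivity
  have hc2 : 0 < 2 * lam * a * (a + 1) := by positivity
  set c : ℝ := lam * a * (a + 1) with hcdef
  set u : ℝ := (2 * lam * a * (a + 1)) ^ ((1 : ℝ) / 3) with hudef
  set v : ℝ := (lam * a * (a + 1)) ^ ((1 : ℝ) / 3) with hvdef
  set W : ℝ := (2 : ℝ) ^ ((2 : ℝ) / 3) with hWdef
  have hu0 : 0 < u := Real.rpow_pos_of_pos hc2 _
  have hv0 : 0 < v := Real.rpow_pos_of_pos hc _
  have hW0 : 0 < W := Real.rpow_pos_of_pos (by norm_num) _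
  have hu3 : u ^ 3 = 2 * c := by
    rw [hudef, ← Real.rpow_natCast _ 3, ← Real.rpow_mul hc2.le]
    norm_num; ring
  have hv3 : v ^ 3 = c := by
    rw [hvdef, ← Real.rpow_natCast _ 3, ← Real.rpow_mul hc.le]
    norm_num
  have huW : u * W = 2 * v := by
    rw [hudef, hWdef, hvdef]
    rw [show 2 * lam * a * (a + 1) = 2 * (lam * a * (a + 1)) by ring]
    rw [Real.mul_rpow (by norm_num) hc.le, mul_comm ((2:ℝ) ^ ((1:ℝ)/3)) _, mul_assoc,
      ← Real.rpow_add (by norm_num : (0:ℝ) < 2)]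
    norm_num
    ring
  have hyb : 0 < ybar := by
    have h3 : a ^ 3 < u ^ 3 := by
      rw [hu3, hcdef]
      have : a ^ 2 < 2 * (a + 1) * lam := by
        rw [div_lt_iff₀ (by positivity)] at hlam; linarith
      nlinarith
    have : a < u := by nlinarith [sq_nonneg (u - a), sq_nonneg (u + a), mul_pos hu0 ha]
    simp only [ybar]; linarith
  -- key pointwise inequality
  have key : ∀ s : ℝ, 0 < s → u + c / u ^ 2 ≤ s + c / s ^ 2 := by
    intro s hs
    have h1 : u + c / u ^ 2 = (u ^ 3 + c) / u ^ 2 := by field_simp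
    have h2 : s + c / s ^ 2 = (s ^ 3 + c) / s ^ 2 := by field_simp
    rw [h1, h2, div_le_div_iff₀ (by positivity) (by positivity)]
    nlinarith [mul_nonneg (sq_nonneg (u * (s - u))) (by positivity : (0:ℝ) ≤ 2 * s + u)]
  have hmin : ∀ y : ℝ, 0 ≤ y → f' ybar ≤ f' y := by
    intro y hy
    have h1 : a + ybar = u := by simp only [ybar]; ring
    simp only [f', h1]
    have := key (a + y) (by linarith)
    simp only [ybar, hcdef] at *
    linarith [this]
  have hval : f' ybar = t₁ - x := by
    have h1 : a + ybar = u := by simp only [ybar]; ring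
    simp only [f', t₁, h1, ybar]
    have hWne : W ≠ 0 := ne_of_gt hW0
    have hune : u ≠ 0 := ne_of_gt hu0
    have hcu : c / u ^ 2 = u / 2 := by
      rw [div_eq_div_iff (by positivity : (u:ℝ)^2 ≠ 0) (by norm_num : (2:ℝ) ≠ 0)]
      linear_combination -hu3
    have hv' : 3 / W * v = 3 * u / 2 := by
      rw [div_mul_eq_mul_div, div_eq_div_iff (ne_of_gt hW0) (by norm_num : (2:ℝ) ≠ 0)]
      linear_combination (-3 : ℝ) * huW
    have : u + c / u ^ 2 = 3 / W * v := by rw [hcu, hv']; ring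
    simp only [hcdef] at this
    linarith [this]
  refine ⟨hyb, hmin, hval, ?_⟩
  intro hxt
  have hderiv : ∀ y : ℝ, 0 ≤ y → HasDerivAt f (f' y) y := by
    intro y hy
    have hay : 0 < a + y := by linarith
    have h1 : HasDerivAt (fun y : ℝ => (1 / 2 : ℝ) * (y - x) ^ 2) (y - x) y := by
      have := ((hasDerivAt_id y).sub_const x).pow 2
      simpa using (this.const_mul (1/2 : ℝ))
    have hnum : HasDerivAt (fun y : ℝ => (a + 1) * y) (a + 1) y := by
      simpa using (hasDerivAt_id y).const_mul (a + 1)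
    have hden : HasDerivAt (fun y : ℝ => a + y) 1 y := by
      simpa using (hasDerivAt_id' y).const_add a
    have h2 : HasDerivAt (fun y : ℝ => (a + 1) * y / (a + y))
        (((a + 1) * (a + y) - (a + 1) * y * 1) / (a + y) ^ 2) y :=
      hnum.div hden (ne_of_gt hay)
    have h3 := h1.add (h2.const_mul lam)
    refine h3.congr_deriv ?_
    simp only [f']
    field_simp
    ring
  have hmono : MonotoneOn f (Set.Ici 0) := by
    apply monotoneOn_of_deriv_nonneg (convex_Ici 0)
    · intro y hy
      exact (hderiv y hy).continuousAt.continuousWithinAt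
    · intro y hy
      rw [interior_Ici] at hy
      exact (hderiv y (le_of_lt hy)).differentiableAt.differentiableWithinAt
    · intro y hy
      rw [interior_Ici] at hy
      rw [(hderiv y (le_of_lt hy)).deriv]
      have := hmin y (le_of_lt hy)
      rw [hval] at this
      linarith
  exact ⟨hmono, fun y hy => hmono (Set.self_mem_Ici) hy hy⟩
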